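/- Invariants of the S¹-reduced homogeneous Chaplygin sphere: let c ≠ 0 and ω₃ ∈ ℝ, and let γ, a : ℝ → ℝ³ be differentiable solutions of γ̇(t) = a(t)/c, ȧ(t) = ω₃ a(t) × γ(t) − (‖a(t)‖²/c) γ(t), with ⟨γ(0), γ(0)⟩ = 1 and ⟨a(0), γ(0)⟩ = 0. Then for all t: ⟨γ(t), γ(t)⟩ = 1, ⟨a(t), γ(t)⟩ = 0, and ‖a(t)‖ = ‖a(0)‖. Thus on each level set of ‖a‖ the reduced system is an isotropic oscillator with a Lorentz-type force. -/

import Mathlib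

open Matrix

/-- Euclidean inner product on ℝ³. -/
def dot3 (u v : Fin 3 → ℝ) : ℝ := u 0 * v 0 + u 1 * v 1 + u 2 * v 2

/-- Cross product on ℝ³. -/
def cross3 (u v : Fin 3 → ℝ) : Fin 3 → ℝ :=
  ![u 1 * v 2 - u 2 * v 1, u 2 * v 0 - u 0 * v 2, u 0 * v 1 - u 1 * v 0]

lemma zero_of_lin_bound {F F' : ℝ → ℝ × ℝ} {K : ℝ → ℝ}
    (hF : ∀ t, HasDerivAt F (F' t) t) (hKc : Continuous K)
    (hb : ∀ t, ‖F' t‖ ≤ K t * ‖F t‖) (h0 : F 0 = 0) : ∀ t, F t = 0 := by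
  have main : ∀ (G G' : ℝ → ℝ × ℝ) (L : ℝ → ℝ), (∀ t, HasDerivAt G (G' t) t) →
      Continuous L → (∀ t, ‖G' t‖ ≤ L t * ‖G t‖) → G 0 = 0 → ∀ t ≥ 0, G t = 0 := by
    intro G G' L hG hLc hLb hG0 t ht
    obtain ⟨M, hM⟩ := (isCompact_Icc (a := 0) (b := t)).exists_bound_of_continuousOn
      hLc.continuousOn
    have key : ∀ x ∈ Set.Icc (0:ℝ) t, ‖G x‖ ≤ gronwallBound 0 M 0 (x - 0) := by
      apply norm_le_gronwallBound_of_norm_deriv_right_le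
      · exact fun x _ => (hG x).continuousAt.continuousWithinAt
      · exact fun x _ => (hG x).hasDerivWithinAt
      · simp [hG0]
      · intro x hx
        have hLM : L x ≤ M := (le_abs_self _).trans (hM x (Set.mem_Icc_of_Ico hx))
        calc ‖G' x‖ ≤ L x * ‖G x‖ := hLb x
          _ ≤ M * ‖G x‖ := by nlinarith [norm_nonneg (G x)]
          _ ≤ M * ‖G x‖ + 0 := by linarith
    have := key t (Set.mem_Icc.2 ⟨ht, le_refl t⟩)
    rw [gronwallBound_ε0_δ0] at this
    exact norm_le_zero_iff.1 this
  intro t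
  rcases le_or_gt 0 t with ht | ht
  · exact main F F' K hF hKc hb h0 t ht
  · have hneg : ∀ s, HasDerivAt (fun s => F (-s)) (-F' (-s)) s := by
      intro s
      have := (hF (-s)).scomp s (hasDerivAt_neg s)
      exact this.congr_deriv (neg_one_smul ℝ _)
    have := main (fun s => F (-s)) (fun s => -F' (-s)) (fun s => K (-s)) hneg
      (hKc.comp continuous_neg) (fun s => by simpa using hb (-s)) (by simpa using h0)
      (-t) (by linarith)
    simpa using this


lemma bound_aux {cabs u v h : ℝ} (hc : 0 < cabs) :
    max (2 / cabs * |v|) (|h| / cabs * |u|) ≤ (2 + |h|) / cabs * max |u| |v| := by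
  have hM0 : (0:ℝ) ≤ max |u| |v| := le_trans (abs_nonneg u) (le_max_left _ _)
  have hu : |u| ≤ max |u| |v| := le_max_left _ _
  have hv : |v| ≤ max |u| |v| := le_max_right _ _
  have hh : (0:ℝ) ≤ |h| := abs_nonneg h
  apply max_le
  · rw [div_mul_eq_mul_div, div_mul_eq_mul_div, div_le_div_iff₀ hc hc]
    nlinarith [mul_nonneg (mul_nonneg hh hM0) hc.le,
      mul_le_mul_of_nonneg_right hv hc.le]
  · rw [div_mul_eq_mul_div, div_mul_eq_mul_div, div_le_div_iff₀ hc hc]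
    nlinarith [mul_le_mul_of_nonneg_right (mul_le_mul_of_nonneg_left hu hh) hc.le,
      mul_nonneg hM0 hc.le]

theorem reduced_homogeneous_sphere_invariants
    (c ω₃ : ℝ) (hc : c ≠ 0)
    (γ a : ℝ → Fin 3 → ℝ)
    (hγ : ∀ t, HasDerivAt γ (c⁻¹ • a t) t)
    (ha : ∀ t, HasDerivAt a
        (ω₃ • cross3 (a t) (γ t) - (dot3 (a t) (a t) / c) • γ t) t)
    (hγ0 : dot3 (γ 0) (γ 0) = 1) (ha0 : dot3 (a 0) (γ 0) = 0) :
    (∀ t, dot3 (γ t) (γ t) = 1) ∧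
    (∀ t, dot3 (a t) (γ t) = 0) ∧
    (∀ t, dot3 (a t) (a t) = dot3 (a 0) (a 0)) := by
  have hγi : ∀ t i, HasDerivAt (fun t => γ t i) (c⁻¹ * a t i) t := by
    intro t i
    simpa using hasDerivAt_pi.1 (hγ t) i
  have hai : ∀ t i, HasDerivAt (fun t => a t i)
      (ω₃ * cross3 (a t) (γ t) i - dot3 (a t) (a t) / c * γ t i) t := by
    intro t i
    simpa [sub_eq_add_neg] using hasDerivAt_pi.1 (ha t) i
  -- derivative of f = ⟨γ,γ⟩
  have hf : ∀ t, HasDerivAt (fun t => dot3 (γ t) (γ t))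
      (2 / c * dot3 (a t) (γ t)) t := by
    intro t
    have H := (((hγi t 0).mul (hγi t 0)).add ((hγi t 1).mul (hγi t 1))).add
      ((hγi t 2).mul (hγi t 2))
    refine H.congr_deriv ?_
    simp only [dot3]
    field_simp
    ring
  -- derivative of g = ⟨a,γ⟩
  have hg : ∀ t, HasDerivAt (fun t => dot3 (a t) (γ t))
      (dot3 (a t) (a t) / c * (1 - dot3 (γ t) (γ t))) t := by
    intro t
    have H := (((hai t 0).mul (hγi t 0)).add ((hai t 1).mul (hγi t 1))).add
      ((hai t 2).mul (hγi t 2))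
    refine H.congr_deriv ?_
    simp only [dot3, cross3]
    simp only [Matrix.cons_val_zero, Matrix.cons_val_one, Matrix.head_cons,
      Matrix.cons_val_two, Matrix.tail_cons]
    field_simp
    ring
  -- derivative of h = ⟨a,a⟩
  have hh : ∀ t, HasDerivAt (fun t => dot3 (a t) (a t))
      (-(2 / c) * dot3 (a t) (a t) * dot3 (a t) (γ t)) t := by
    intro t
    have H := (((hai t 0).mul (hai t 0)).add ((hai t 1).mul (hai t 1))).add
      ((hai t 2).mul (hai t 2))
    refine H.congr_deriv ?_
    simp only [dot3, cross3]
    simp only [Matrix.cons_val_zero, Matrix.cons_val_one, Matrix.head_cons,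
      Matrix.cons_val_two, Matrix.tail_cons]
    field_simp
    ring
  have hacont : Continuous fun t => dot3 (a t) (a t) := by
    have : ∀ i, Continuous fun t => a t i := fun i =>
      continuous_iff_continuousAt.2 fun t => (hai t i).continuousAt
    simp only [dot3]
    fun_prop
  set F : ℝ → ℝ × ℝ := fun t => (dot3 (γ t) (γ t) - 1, dot3 (a t) (γ t)) with hFdef
  set F' : ℝ → ℝ × ℝ := fun t => (2 / c * dot3 (a t) (γ t),
    dot3 (a t) (a t) / c * (1 - dot3 (γ t) (γ t))) with hF'def
  have hF : ∀ t, HasDerivAt F (F' t) t := fun t => ((hf t).sub_const 1).prodMk (hg t)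
  set K : ℝ → ℝ := fun t => (2 + |dot3 (a t) (a t)|) / |c| with hKdef
  have hKc : Continuous K := by
    apply Continuous.div_const
    exact continuous_const.add hacont.abs
  have hcpos : 0 < |c| := abs_pos.2 hc
  have hb : ∀ t, ‖F' t‖ ≤ K t * ‖F t‖ := by
    intro t
    have hFt : ‖F t‖ = max |dot3 (γ t) (γ t) - 1| |dot3 (a t) (γ t)| := by
      simp only [F, Prod.norm_def, Real.norm_eq_abs]
    have hF't : ‖F' t‖ = max (2 / |c| * |dot3 (a t) (γ t)|)
        (|dot3 (a t) (a t)| / |c| * |dot3 (γ t) (γ t) - 1|) := by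
      simp only [F', Prod.norm_def, Real.norm_eq_abs]
      congr 1
      · rw [abs_mul, abs_div]; norm_num
      · rw [abs_mul, abs_div]
        congr 1
        rw [show 1 - dot3 (γ t) (γ t) = -(dot3 (γ t) (γ t) - 1) by ring, abs_neg]
    rw [hFt, hF't, hKdef]
    exact bound_aux hcpos
  have hF0 : F 0 = 0 := by simp [F, hγ0, ha0]
  have hFzero := zero_of_lin_bound hF hKc hb hF0
  have hγ1 : ∀ t, dot3 (γ t) (γ t) = 1 := by
    intro t
    have := congrArg Prod.fst (hFzero t)
    simpa [F, sub_eq_zero] using this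
  have hag : ∀ t, dot3 (a t) (γ t) = 0 := by
    intro t
    have := congrArg Prod.snd (hFzero t)
    simpa [F] using this
  refine ⟨hγ1, hag, ?_⟩
  have hhz : ∀ t, HasDerivAt (fun t => dot3 (a t) (a t)) 0 t := by
    intro t
    have := hh t
    rwa [hag t, mul_zero] at this
  have hdiff : Differentiable ℝ fun t => dot3 (a t) (a t) :=
    fun t => (hhz t).differentiableAt
  intro t
  exact is_const_of_deriv_eq_zero hdiff (fun x => (hhz x).deriv) t 0
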